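/- arXiv:1910.12529 — 3 statements merged into one kernel-verified Lean document; each statement's English description precedes it below -/
import Mathlib

section
/- The integral over the real line ∫_ℝ (−1 − 3ix + 5x² + 3ix³)/((x − i)⁶(x + i)⁴) dx equals 15π/64. -/
open Complex Real Filter MeasureTheory

noncomputable def F13 (x : ℝ) : ℂ :=
  I / 32 * (((x : ℂ) - I)⁻¹) ^ 4 + 1 / 16 * ((x : ℂ) - I)⁻¹
    - 1 / 16 * (((x : ℂ) + I)⁻¹) ^ 3 + 7 * I / 64 * (((x : ℂ) + I)⁻¹) ^ 2
    + 11 / 64 * ((x : ℂ) + I)⁻¹ + 15 / 64 * ((Real.arctan x : ℝ) : ℂ)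

lemma sub_I_ne (x : ℝ) : (x : ℂ) - I ≠ 0 := by
  intro h
  have := congrArg Complex.im h
  simp at this

lemma add_I_ne (x : ℝ) : (x : ℂ) + I ≠ 0 := by
  intro h
  have := congrArg Complex.im h
  simp at this

lemma abs_le_norm_sub_I (x : ℝ) : |x| ≤ ‖(x : ℂ) - I‖ := by
  have := Complex.abs_re_le_norm ((x : ℂ) - I)
  simpa using this

lemma abs_le_norm_add_I (x : ℝ) : |x| ≤ ‖(x : ℂ) + I‖ := by
  have := Complex.abs_re_le_norm ((x : ℂ) + I)
  simpa using this

lemma tendsto_inv_abs_atTop : Tendsto (fun x : ℝ => |x|⁻¹) atTop (nhds 0) :=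
  tendsto_inv_atTop_zero.comp tendsto_abs_atTop_atTop

lemma tendsto_inv_abs_atBot : Tendsto (fun x : ℝ => |x|⁻¹) atBot (nhds 0) :=
  tendsto_inv_atTop_zero.comp tendsto_abs_atBot_atTop

lemma tendsto_of_abs_le {g : ℝ → ℂ} (hg : ∀ x : ℝ, |x| ≤ ‖g x‖) {l : Filter ℝ}
    (hl : Tendsto (fun x : ℝ => |x|⁻¹) l (nhds 0))
    (hev : ∀ᶠ x in l, 1 ≤ |x|) :
    Tendsto (fun x : ℝ => (g x)⁻¹) l (nhds 0) := by
  apply squeeze_zero_norm' (a := fun x : ℝ => |x|⁻¹) _ hl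
  filter_upwards [hev] with x hx
  rw [norm_inv]
  exact inv_anti₀ (by linarith) (hg x)

lemma eventually_abs_atTop : ∀ᶠ x : ℝ in atTop, 1 ≤ |x| := by
  filter_upwards [eventually_ge_atTop (1 : ℝ)] with x hx
  exact le_trans hx (le_abs_self x)

lemma eventually_abs_atBot : ∀ᶠ x : ℝ in atBot, 1 ≤ |x| := by
  filter_upwards [eventually_le_atBot (-1 : ℝ)] with x hx
  rw [abs_of_nonpos (by linarith)]
  linarith

lemma norm_sq_sub_I (x : ℝ) : ‖(x : ℂ) - I‖ ^ 2 = x ^ 2 + 1 := by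
  rw [Complex.sq_norm]
  simp [Complex.normSq_apply]
  ring

lemma norm_sq_add_I (x : ℝ) : ‖(x : ℂ) + I‖ ^ 2 = x ^ 2 + 1 := by
  rw [Complex.sq_norm]
  simp [Complex.normSq_apply]
  ring

set_option maxHeartbeats 1000000 in
lemma F13_hasDerivAt (x : ℝ) :
    HasDerivAt F13
      ((-1 - 3 * I * (x : ℂ) + 5 * (x : ℂ) ^ 2 + 3 * I * (x : ℂ) ^ 3) /
        (((x : ℂ) - I) ^ 6 * ((x : ℂ) + I) ^ 4)) x := by
  have h1 : (x : ℂ) - I ≠ 0 := sub_I_ne x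
  have h2 : (x : ℂ) + I ≠ 0 := add_I_ne x
  have d1 : HasDerivAt (fun z : ℂ =>
      I / 32 * ((z - I)⁻¹) ^ 4 + 1 / 16 * (z - I)⁻¹
        - 1 / 16 * ((z + I)⁻¹) ^ 3 + 7 * I / 64 * ((z + I)⁻¹) ^ 2
        + 11 / 64 * (z + I)⁻¹)
      (I / 32 * (4 * (((x : ℂ) - I)⁻¹) ^ 3 * (-1 / ((x : ℂ) - I) ^ 2))
        + 1 / 16 * (-1 / ((x : ℂ) - I) ^ 2)
        - 1 / 16 * (3 * (((x : ℂ) + I)⁻¹) ^ 2 * (-1 / ((x : ℂ) + I) ^ 2))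
        + 7 * I / 64 * (2 * (((x : ℂ) + I)⁻¹) ^ 1 * (-1 / ((x : ℂ) + I) ^ 2))
        + 11 / 64 * (-1 / ((x : ℂ) + I) ^ 2)) (x : ℂ) := by
    have e1 : HasDerivAt (fun z : ℂ => (z - I)⁻¹) (-1 / ((x : ℂ) - I) ^ 2) (x : ℂ) := by
      have h := ((hasDerivAt_id (x : ℂ)).sub_const I).inv h1
      simp at h
      exact h
    have e2 : HasDerivAt (fun z : ℂ => (z + I)⁻¹) (-1 / ((x : ℂ) + I) ^ 2) (x : ℂ) := by
      have h := ((hasDerivAt_id (x : ℂ)).add_const I).inv h2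
      simp at h
      exact h
    exact (((((e1.pow 4).const_mul (I / 32)).add (e1.const_mul (1 / 16))).sub
      ((e2.pow 3).const_mul (1 / 16))).add ((e2.pow 2).const_mul (7 * I / 64))).add
      (e2.const_mul (11 / 64))
  have d2 : HasDerivAt (fun x : ℝ => (15 : ℂ) / 64 * ((Real.arctan x : ℝ) : ℂ))
      ((15 : ℂ) / 64 * (((1 / (1 + x ^ 2) : ℝ) : ℝ) : ℂ)) x :=
    ((Real.hasDerivAt_arctan x).ofReal_comp).const_mul _
  have := d1.comp_ofReal.add d2
  refine HasDerivAt.congr_deriv (f := F13) this ?_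
  symm
  have hq : (((1 : ℝ) / (1 + x ^ 2) : ℝ) : ℂ)
      = -(I / 2) * (((x : ℂ) - I)⁻¹ - ((x : ℂ) + I)⁻¹) := by
    have hx : (1 : ℂ) + (x : ℂ) ^ 2 = ((x : ℂ) - I) * ((x : ℂ) + I) := by
      linear_combination Complex.I_sq
    push_cast
    rw [one_div, hx, mul_inv]
    field_simp
    linear_combination 2 * Complex.I_sq
  rw [hq]
  have e1 : ((-1 : ℂ) - 3 * I * (x : ℂ) + 5 * (x : ℂ) ^ 2 + 3 * I * (x : ℂ) ^ 3)
      = -(I / 8) * (((x : ℂ) - I) * ((x : ℂ) + I) ^ 4)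
        + -(1 / 16) * (((x : ℂ) - I) ^ 4 * ((x : ℂ) + I) ^ 4)
        + -(15 * I / 128) * (((x : ℂ) - I) ^ 5 * ((x : ℂ) + I) ^ 4)
        + (3 / 16) * ((x : ℂ) - I) ^ 6
        + -(7 * I / 32) * (((x : ℂ) - I) ^ 6 * ((x : ℂ) + I))
        + -(11 / 64) * (((x : ℂ) - I) ^ 6 * ((x : ℂ) + I) ^ 2)
        + (15 * I / 128) * (((x : ℂ) - I) ^ 6 * ((x : ℂ) + I) ^ 3) := by
    linear_combination (-1 + I^2 - I^4 + 11/16*I^6 - 15/64*I^8 - 3*(x:ℂ)*I + 3*(x:ℂ)*I^3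
      - 9/4*(x:ℂ)*I^5 + 15/32*(x:ℂ)*I^7 + 5*(x:ℂ)^2 - 5*(x:ℂ)^2*I^2 + 31/16*(x:ℂ)^2*I^4
      + 15/32*(x:ℂ)^2*I^6 + 3*(x:ℂ)^3*I + (x:ℂ)^3*I^3 - 45/32*(x:ℂ)^3*I^5
      - 39/16*(x:ℂ)^4*I^2 + 5/4*(x:ℂ)^5*I + 45/32*(x:ℂ)^5*I^3 - 3/16*(x:ℂ)^6
      - 15/32*(x:ℂ)^6*I^2 - 15/32*(x:ℂ)^7*I + 15/64*(x:ℂ)^8) * Complex.I_sq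
  rw [e1]
  simp only [add_div]
  have t1 : -(I / 8) * (((x : ℂ) - I) * ((x : ℂ) + I) ^ 4) / (((x : ℂ) - I) ^ 6 * ((x : ℂ) + I) ^ 4)
      = -(I / 8) * (((x : ℂ) - I)⁻¹) ^ 5 := by field_simp
  have t2 : -(1 / 16) * (((x : ℂ) - I) ^ 4 * ((x : ℂ) + I) ^ 4) / (((x : ℂ) - I) ^ 6 * ((x : ℂ) + I) ^ 4)
      = -(1 / 16) * (((x : ℂ) - I)⁻¹) ^ 2 := by field_simp
  have t3 : -(15 * I / 128) * (((x : ℂ) - I) ^ 5 * ((x : ℂ) + I) ^ 4) / (((x : ℂ) - I) ^ 6 * ((x : ℂ) + I) ^ 4)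
      = -(15 * I / 128) * ((x : ℂ) - I)⁻¹ := by field_simp
  have t4 : (3 / 16) * ((x : ℂ) - I) ^ 6 / (((x : ℂ) - I) ^ 6 * ((x : ℂ) + I) ^ 4)
      = (3 / 16) * (((x : ℂ) + I)⁻¹) ^ 4 := by field_simp
  have t5 : -(7 * I / 32) * (((x : ℂ) - I) ^ 6 * ((x : ℂ) + I)) / (((x : ℂ) - I) ^ 6 * ((x : ℂ) + I) ^ 4)
      = -(7 * I / 32) * (((x : ℂ) + I)⁻¹) ^ 3 := by field_simp
  have t6 : -(11 / 64) * (((x : ℂ) - I) ^ 6 * ((x : ℂ) + I) ^ 2) / (((x : ℂ) - I) ^ 6 * ((x : ℂ) + I) ^ 4)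
      = -(11 / 64) * (((x : ℂ) + I)⁻¹) ^ 2 := by field_simp
  have t7 : (15 * I / 128) * (((x : ℂ) - I) ^ 6 * ((x : ℂ) + I) ^ 3) / (((x : ℂ) - I) ^ 6 * ((x : ℂ) + I) ^ 4)
      = (15 * I / 128) * ((x : ℂ) + I)⁻¹ := by field_simp
  rw [t1, t2, t3, t4, t5, t6, t7]
  simp only [div_eq_mul_inv, ← inv_pow]
  ring

lemma F13_tendsto_atTop :
    Tendsto F13 atTop (nhds ((15 : ℂ) / 64 * (((Real.pi / 2 : ℝ)) : ℂ))) := by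
  have t1 : Tendsto (fun x : ℝ => ((x : ℂ) - I)⁻¹) atTop (nhds 0) :=
    tendsto_of_abs_le abs_le_norm_sub_I tendsto_inv_abs_atTop eventually_abs_atTop
  have t2 : Tendsto (fun x : ℝ => ((x : ℂ) + I)⁻¹) atTop (nhds 0) :=
    tendsto_of_abs_le abs_le_norm_add_I tendsto_inv_abs_atTop eventually_abs_atTop
  have t3 : Tendsto (fun x : ℝ => ((Real.arctan x : ℝ) : ℂ)) atTop
      (nhds (((Real.pi / 2 : ℝ)) : ℂ)) :=
    (Complex.continuous_ofReal.continuousAt.tendsto).comp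
      (tendsto_nhds_of_tendsto_nhdsWithin Real.tendsto_arctan_atTop)
  have := ((((((t1.pow 4).const_mul ((I : ℂ) / 32)).add
    (t1.const_mul ((1 : ℂ) / 16))).sub ((t2.pow 3).const_mul ((1 : ℂ) / 16))).add
    ((t2.pow 2).const_mul ((7 : ℂ) * I / 64))).add (t2.const_mul ((11 : ℂ) / 64))).add
    (t3.const_mul ((15 : ℂ) / 64))
  have e : (I : ℂ) / 32 * 0 ^ 4 + 1 / 16 * 0 - 1 / 16 * 0 ^ 3 + 7 * I / 64 * 0 ^ 2
      + 11 / 64 * 0 + 15 / 64 * (((Real.pi / 2 : ℝ)) : ℂ)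
      = (15 : ℂ) / 64 * (((Real.pi / 2 : ℝ)) : ℂ) := by ring
  rw [← e]
  exact this

lemma F13_tendsto_atBot :
    Tendsto F13 atBot (nhds ((15 : ℂ) / 64 * (((-(Real.pi / 2) : ℝ)) : ℂ))) := by
  have t1 : Tendsto (fun x : ℝ => ((x : ℂ) - I)⁻¹) atBot (nhds 0) :=
    tendsto_of_abs_le abs_le_norm_sub_I tendsto_inv_abs_atBot eventually_abs_atBot
  have t2 : Tendsto (fun x : ℝ => ((x : ℂ) + I)⁻¹) atBot (nhds 0) :=
    tendsto_of_abs_le abs_le_norm_add_I tendsto_inv_abs_atBot eventually_abs_atBot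
  have t3 : Tendsto (fun x : ℝ => ((Real.arctan x : ℝ) : ℂ)) atBot
      (nhds (((-(Real.pi / 2) : ℝ)) : ℂ)) :=
    (Complex.continuous_ofReal.continuousAt.tendsto).comp
      (tendsto_nhds_of_tendsto_nhdsWithin Real.tendsto_arctan_atBot)
  have := ((((((t1.pow 4).const_mul ((I : ℂ) / 32)).add
    (t1.const_mul ((1 : ℂ) / 16))).sub ((t2.pow 3).const_mul ((1 : ℂ) / 16))).add
    ((t2.pow 2).const_mul ((7 : ℂ) * I / 64))).add (t2.const_mul ((11 : ℂ) / 64))).add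
    (t3.const_mul ((15 : ℂ) / 64))
  have e : (I : ℂ) / 32 * 0 ^ 4 + 1 / 16 * 0 - 1 / 16 * 0 ^ 3 + 7 * I / 64 * 0 ^ 2
      + 11 / 64 * 0 + 15 / 64 * (((-(Real.pi / 2) : ℝ)) : ℂ)
      = (15 : ℂ) / 64 * (((-(Real.pi / 2) : ℝ)) : ℂ) := by ring
  rw [← e]
  exact this

lemma integrand_integrable :
    Integrable (fun x : ℝ =>
      (-1 - 3 * I * (x : ℂ) + 5 * (x : ℂ) ^ 2 + 3 * I * (x : ℂ) ^ 3) /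
        (((x : ℂ) - I) ^ 6 * ((x : ℂ) + I) ^ 4)) := by
  have hcont : Continuous (fun x : ℝ =>
      (-1 - 3 * I * (x : ℂ) + 5 * (x : ℂ) ^ 2 + 3 * I * (x : ℂ) ^ 3) /
        (((x : ℂ) - I) ^ 6 * ((x : ℂ) + I) ^ 4)) := by
    apply Continuous.div
    · fun_prop
    · fun_prop
    · intro x
      exact mul_ne_zero (pow_ne_zero _ (sub_I_ne x)) (pow_ne_zero _ (add_I_ne x))
  apply Integrable.mono' (g := fun x : ℝ => 12 * (1 + x ^ 2)⁻¹)
    (integrable_inv_one_add_sq.const_mul 12) hcont.aestronglyMeasurable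
  filter_upwards with x
  have ha : ‖(x : ℂ) - I‖ ^ 2 = x ^ 2 + 1 := norm_sq_sub_I x
  have hb : ‖(x : ℂ) + I‖ ^ 2 = x ^ 2 + 1 := norm_sq_add_I x
  have hden : ‖((x : ℂ) - I) ^ 6 * ((x : ℂ) + I) ^ 4‖ = (x ^ 2 + 1) ^ 5 := by
    rw [norm_mul, norm_pow, norm_pow]
    have : ‖(x : ℂ) - I‖ ^ 6 = (‖(x : ℂ) - I‖ ^ 2) ^ 3 := by ring
    rw [this, ha]
    have : ‖(x : ℂ) + I‖ ^ 4 = (‖(x : ℂ) + I‖ ^ 2) ^ 2 := by ring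
    rw [this, hb]
    ring
  rw [norm_div, hden]
  have hnum : ‖(-1 : ℂ) - 3 * I * (x : ℂ) + 5 * (x : ℂ) ^ 2 + 3 * I * (x : ℂ) ^ 3‖
      ≤ 1 + 3 * |x| + 5 * |x| ^ 2 + 3 * |x| ^ 3 := by
    calc ‖(-1 : ℂ) - 3 * I * (x : ℂ) + 5 * (x : ℂ) ^ 2 + 3 * I * (x : ℂ) ^ 3‖
        ≤ ‖(-1 : ℂ) - 3 * I * (x : ℂ) + 5 * (x : ℂ) ^ 2‖ + ‖3 * I * (x : ℂ) ^ 3‖ :=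
          norm_add_le _ _
      _ ≤ (‖(-1 : ℂ) - 3 * I * (x : ℂ)‖ + ‖5 * (x : ℂ) ^ 2‖) + ‖3 * I * (x : ℂ) ^ 3‖ := by
          gcongr
          exact norm_add_le _ _
      _ ≤ ((‖(-1 : ℂ)‖ + ‖3 * I * (x : ℂ)‖) + ‖5 * (x : ℂ) ^ 2‖) + ‖3 * I * (x : ℂ) ^ 3‖ := by
          gcongr
          exact norm_sub_le _ _
      _ = 1 + 3 * |x| + 5 * |x| ^ 2 + 3 * |x| ^ 3 := by
          simp [norm_mul, norm_pow, Complex.norm_real, Real.norm_eq_abs]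
  have hx2 : (1 : ℝ) ≤ 1 + x ^ 2 := by nlinarith [sq_nonneg x]
  have h4 : (1 + x ^ 2) ^ 2 ≤ (1 + x ^ 2) ^ 4 := by
    nlinarith [sq_nonneg x, sq_nonneg (x ^ 2), sq_nonneg (1 + x ^ 2)]
  have hax : |x| ^ 2 = x ^ 2 := _root_.sq_abs x
  have hbound : 1 + 3 * |x| + 5 * |x| ^ 2 + 3 * |x| ^ 3 ≤ 12 * (1 + x ^ 2) ^ 4 := by
    nlinarith [sq_nonneg (|x| - 1), abs_nonneg x, h4, hax,
      mul_nonneg (abs_nonneg x) (sq_nonneg (|x| - 1))]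
  rw [div_le_iff₀ (by positivity)]
  have key : 12 * (1 + x ^ 2)⁻¹ * (x ^ 2 + 1) ^ 5 = 12 * (1 + x ^ 2) ^ 4 := by
    have : (1 : ℝ) + x ^ 2 ≠ 0 := by positivity
    field_simp
    ring
  rw [key]
  linarith [hnum]

theorem stmt_13 :
    ∫ x : ℝ, (-1 - 3 * I * (x : ℂ) + 5 * (x : ℂ) ^ 2 + 3 * I * (x : ℂ) ^ 3) / (((x : ℂ) - I) ^ 6 * ((x : ℂ) + I) ^ 4) = 15 * (Real.pi : ℂ) / 64 := by
  rw [MeasureTheory.integral_of_hasDerivAt_of_tendsto F13_hasDerivAt integrand_integrable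
    F13_tendsto_atBot F13_tendsto_atTop]
  push_cast
  ring
end

section
/- The integral over the real line ∫_ℝ (−7i + 26x + 15ix²)/((x − i)⁵(x + i)³) dx equals 55πi/16. -/
open Complex Real MeasureTheory Filter Topology

lemma aux_ne (c : ℂ) (hc : c.im ≠ 0) (x : ℝ) : (x : ℂ) - c ≠ 0 := by
  intro h
  have : ((x : ℂ) - c).im = 0 := by rw [h]; simp
  simp [Complex.sub_im] at this
  exact hc this

lemma aux_norm_sq (c : ℂ) (hre : c.re = 0) (him : c.im ^ 2 = 1) (x : ℝ) :
    ‖(x : ℂ) - c‖ ^ 2 = 1 + x ^ 2 := by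
  rw [Complex.sq_norm]
  simp [Complex.normSq_apply, Complex.sub_re, Complex.sub_im, hre]
  nlinarith [him]

lemma aux_one_le (c : ℂ) (hre : c.re = 0) (him : c.im ^ 2 = 1) (x : ℝ) :
    1 ≤ ‖(x : ℂ) - c‖ := by
  have h := aux_norm_sq c hre him x
  nlinarith [norm_nonneg ((x : ℂ) - c), sq_nonneg x]

lemma aux_abs_le (c : ℂ) (hre : c.re = 0) (him : c.im ^ 2 = 1) (x : ℝ) :
    |x| ≤ ‖(x : ℂ) - c‖ := by
  have h := aux_norm_sq c hre him x
  nlinarith [norm_nonneg ((x : ℂ) - c), _root_.sq_abs x, abs_nonneg x]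

lemma aux_integrable (c : ℂ) (hre : c.re = 0) (him : c.im ^ 2 = 1) (m : ℕ) :
    Integrable fun x : ℝ => (((x : ℂ) - c) ^ (m + 2))⁻¹ := by
  have hcim : c.im ≠ 0 := by intro h; rw [h] at him; norm_num at him
  have hcont : Continuous fun x : ℝ => (((x : ℂ) - c) ^ (m + 2))⁻¹ := by
    apply Continuous.inv₀
    · exact (Complex.continuous_ofReal.sub continuous_const).pow _
    · intro x; exact pow_ne_zero _ (aux_ne c hcim x)
  refine (integrable_inv_one_add_sq).mono hcont.aestronglyMeasurable ?_
  filter_upwards with x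
  have h1 : (1:ℝ) ≤ ‖(x : ℂ) - c‖ := aux_one_le c hre him x
  have h2 : ‖(x : ℂ) - c‖ ^ 2 = 1 + x ^ 2 := aux_norm_sq c hre him x
  have h3 : ‖(x : ℂ) - c‖ ^ 2 ≤ ‖(x : ℂ) - c‖ ^ (m + 2) :=
    pow_le_pow_right₀ h1 (by omega)
  have h4 : (0:ℝ) < 1 + x ^ 2 := by positivity
  rw [norm_inv, norm_pow, Real.norm_eq_abs, abs_of_pos (inv_pos.mpr h4)]
  rw [inv_le_inv₀ (by positivity) h4, ← h2]
  exact h3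

lemma aux_tendsto (c : ℂ) (hre : c.re = 0) (him : c.im ^ 2 = 1) (m : ℕ) (l : Filter ℝ)
    (hl : Tendsto (fun x : ℝ => |x|) l atTop) :
    Tendsto (fun x : ℝ => (-(m + 1 : ℂ))⁻¹ * (((x : ℂ) - c) ^ (m + 1))⁻¹) l (𝓝 0) := by
  have h1 : Tendsto (fun x : ℝ => ‖(x : ℂ) - c‖) l atTop :=
    tendsto_atTop_mono (fun x => aux_abs_le c hre him x) hl
  have h2 : Tendsto (fun x : ℝ => ‖(x : ℂ) - c‖ ^ (m + 1)) l atTop :=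
    (tendsto_pow_atTop (n := m + 1) (by omega)).comp h1
  have h3 : Tendsto (fun x : ℝ => (‖(x : ℂ) - c‖ ^ (m + 1))⁻¹) l (𝓝 0) :=
    h2.inv_tendsto_atTop
  have h4 : Tendsto (fun x : ℝ => (((x : ℂ) - c) ^ (m + 1))⁻¹) l (𝓝 0) := by
    rw [tendsto_zero_iff_norm_tendsto_zero]
    simpa [norm_inv, norm_pow] using h3
  simpa using h4.const_mul ((-(m + 1 : ℂ))⁻¹)

lemma aux_alg (z a : ℂ) (hz : z ≠ 0) (m : ℕ) (ha : a + 1 ≠ 0) :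
    (z ^ (m + 2))⁻¹ = (-(a + 1))⁻¹ * (-((a + 1) * z ^ m * 1) / (z ^ (m + 1)) ^ 2) := by
  rw [show ((z ^ (m + 1)) ^ 2 : ℂ) = z ^ m * z ^ (m + 2) from by ring, mul_one, neg_div,
    inv_neg, neg_mul_neg, div_eq_mul_inv, ← mul_assoc,
    inv_mul_cancel_left₀ ha, mul_inv, ← mul_assoc, mul_inv_cancel₀ (pow_ne_zero _ hz), one_mul]

lemma aux_vanish (c : ℂ) (hre : c.re = 0) (him : c.im ^ 2 = 1) (m : ℕ) :
    ∫ x : ℝ, (((x : ℂ) - c) ^ (m + 2))⁻¹ = 0 := by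
  have hcim : c.im ≠ 0 := by intro h; rw [h] at him; norm_num at him
  have hderiv : ∀ x : ℝ, HasDerivAt (fun x : ℝ => (-(m + 1 : ℂ))⁻¹ * (((x : ℂ) - c) ^ (m + 1))⁻¹)
      ((((x : ℂ) - c) ^ (m + 2))⁻¹) x := by
    intro x
    have hne : (x : ℂ) - c ≠ 0 := aux_ne c hcim x
    have hg : HasDerivAt (fun z : ℂ => (-(m + 1 : ℂ))⁻¹ * ((z - c) ^ (m + 1))⁻¹)
        ((((x : ℂ) - c) ^ (m + 2))⁻¹) (x : ℂ) := by
      have h0 : HasDerivAt (fun z : ℂ => z - c) 1 (x : ℂ) := (hasDerivAt_id _).sub_const c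
      have h1 := h0.pow (m + 1)
      have h2 := h1.inv (pow_ne_zero _ hne)
      have h3 : HasDerivAt (fun z : ℂ => (-(m + 1 : ℂ))⁻¹ * ((z - c) ^ (m + 1))⁻¹) _ (x : ℂ) :=
        h2.const_mul ((-(m + 1 : ℂ))⁻¹)
      convert h3 using 1
      simp only [Nat.add_sub_cancel, Nat.cast_add, Nat.cast_one]
      exact aux_alg _ _ hne m (Nat.cast_add_one_ne_zero m)
    exact hg.comp_ofReal
  rw [integral_of_hasDerivAt_of_tendsto hderiv (aux_integrable c hre him m)
    (aux_tendsto c hre him m atBot tendsto_abs_atBot_atTop)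
    (aux_tendsto c hre him m atTop tendsto_abs_atTop_atTop)]
  simp

lemma cancel_aux (u v : ℂ) (hu : u ≠ 0) (hv : v ≠ 0) : u⁻¹ = v / (u * v) := by
  rw [eq_comm, div_eq_iff (mul_ne_zero hu hv), inv_mul_cancel_left₀ hu]

set_option maxHeartbeats 1000000 in
lemma frac_split (a b c1 c2 c3 c4 c5 c6 c7 : ℂ) (ha : a ≠ 0) (hb : b ≠ 0) :
    (c1 * b ^ 3 + c2 * (a * b ^ 3) + c3 * (a ^ 2 * b ^ 3) + c4 * (a ^ 3 * b ^ 3)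
      + c5 * a ^ 5 + c6 * (a ^ 5 * b) + c7 * (a ^ 4 * b ^ 2)) / (a ^ 5 * b ^ 3)
    = c1 * (a ^ 5)⁻¹ + c2 * (a ^ 4)⁻¹ + c3 * (a ^ 3)⁻¹ + c4 * (a ^ 2)⁻¹
      + c5 * (b ^ 3)⁻¹ + c6 * (b ^ 2)⁻¹ + c7 * (a * b)⁻¹ := by
  have pa : ∀ n : ℕ, a ^ n ≠ 0 := fun n => pow_ne_zero n ha
  have pb : ∀ n : ℕ, b ^ n ≠ 0 := fun n => pow_ne_zero n hb
  have e1 : (a ^ 5 : ℂ)⁻¹ = b ^ 3 / (a ^ 5 * b ^ 3) := cancel_aux _ _ (pa 5) (pb 3)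
  have e2 : (a ^ 4 : ℂ)⁻¹ = (a * b ^ 3) / (a ^ 5 * b ^ 3) := by
    rw [cancel_aux (a ^ 4) (a * b ^ 3) (pa 4) (mul_ne_zero ha (pb 3))]; ring_nf
  have e3 : (a ^ 3 : ℂ)⁻¹ = (a ^ 2 * b ^ 3) / (a ^ 5 * b ^ 3) := by
    rw [cancel_aux (a ^ 3) (a ^ 2 * b ^ 3) (pa 3) (mul_ne_zero (pa 2) (pb 3))]; ring_nf
  have e4 : (a ^ 2 : ℂ)⁻¹ = (a ^ 3 * b ^ 3) / (a ^ 5 * b ^ 3) := by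
    rw [cancel_aux (a ^ 2) (a ^ 3 * b ^ 3) (pa 2) (mul_ne_zero (pa 3) (pb 3))]; ring_nf
  have e5 : (b ^ 3 : ℂ)⁻¹ = a ^ 5 / (a ^ 5 * b ^ 3) := by
    rw [cancel_aux (b ^ 3) (a ^ 5) (pb 3) (pa 5)]; ring_nf
  have e6 : (b ^ 2 : ℂ)⁻¹ = (a ^ 5 * b) / (a ^ 5 * b ^ 3) := by
    rw [cancel_aux (b ^ 2) (a ^ 5 * b) (pb 2) (mul_ne_zero (pa 5) hb)]; ring_nf
  have e7 : ((a * b : ℂ))⁻¹ = (a ^ 4 * b ^ 2) / (a ^ 5 * b ^ 3) := by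
    rw [cancel_aux (a * b) (a ^ 4 * b ^ 2) (mul_ne_zero ha hb) (mul_ne_zero (pa 4) (pb 2))]
    ring_nf
  rw [e1, e2, e3, e4, e5, e6, e7]
  simp only [mul_div_assoc']
  simp only [← add_div]

set_option maxHeartbeats 1000000 in
lemma key_decomp (z : ℂ) (h1 : z - I ≠ 0) (h2 : z + I ≠ 0) :
    (-7 * I + 26 * z + 15 * I * z ^ 2) / ((z - I) ^ 5 * (z + I) ^ 3)
      = (-(1:ℂ)/2) * ((z - I) ^ 5)⁻¹ + (-(5:ℂ)*I/4) * ((z - I) ^ 4)⁻¹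
        + (-(3:ℂ)/8) * ((z - I) ^ 3)⁻¹ + (-(23:ℂ)*I/16) * ((z - I) ^ 2)⁻¹
        + ((3:ℂ)/2) * ((z + I) ^ 3)⁻¹ + (-(2:ℂ)*I) * ((z + I) ^ 2)⁻¹
        + (55 * I / 16) * ((z - I) * (z + I))⁻¹ := by
  have hI2 : I ^ 2 = -1 := Complex.I_sq
  have hI3 : I ^ 3 = -I := by rw [pow_succ, hI2]; ring
  have hI4 : I ^ 4 = 1 := by rw [pow_succ, hI3]; simp [Complex.I_mul_I]
  have hI5 : I ^ 5 = I := by rw [pow_succ, hI4]; ring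
  have hI6 : I ^ 6 = -1 := by rw [pow_succ, hI5]; simp [Complex.I_mul_I]
  have hI7 : I ^ 7 = -I := by rw [pow_succ, hI6]; ring
  have hI8 : I ^ 8 = 1 := by rw [pow_succ, hI7]; simp [Complex.I_mul_I]
  have hid : (-7 * I + 26 * z + 15 * I * z ^ 2)
      = (-(1:ℂ)/2) * (z + I) ^ 3 + (-(5:ℂ)*I/4) * ((z - I) * (z + I) ^ 3)
        + (-(3:ℂ)/8) * ((z - I) ^ 2 * (z + I) ^ 3) + (-(23:ℂ)*I/16) * ((z - I) ^ 3 * (z + I) ^ 3)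
        + ((3:ℂ)/2) * (z - I) ^ 5 + (-(2:ℂ)*I) * ((z - I) ^ 5 * (z + I))
        + (55 * I / 16) * ((z - I) ^ 4 * (z + I) ^ 2) := by
    ring_nf
    simp only [hI2, hI3, hI4, hI5, hI6, hI7, hI8]
    ring
  rw [hid, frac_split _ _ _ _ _ _ _ _ _ h1 h2]

theorem stmt_16 :
    ∫ x : ℝ, (-7 * I + 26 * (x : ℂ) + 15 * I * (x : ℂ) ^ 2) / (((x : ℂ) - I) ^ 5 * ((x : ℂ) + I) ^ 3) = 55 * Real.pi * I / 16 := by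
  have hI : (I : ℂ).re = 0 := by simp
  have hI2 : (I : ℂ).im ^ 2 = 1 := by simp
  have hnI : (-I : ℂ).re = 0 := by simp
  have hnI2 : (-I : ℂ).im ^ 2 = 1 := by simp
  have int5 := aux_integrable I hI hI2 3
  have int4 := aux_integrable I hI hI2 2
  have int3 := aux_integrable I hI hI2 1
  have int2 := aux_integrable I hI hI2 0
  have jnt3 := aux_integrable (-I) hnI hnI2 1
  have jnt2 := aux_integrable (-I) hnI hnI2 0
  have v5 := aux_vanish I hI hI2 3
  have v4 := aux_vanish I hI hI2 2
  have v3 := aux_vanish I hI hI2 1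
  have v2 := aux_vanish I hI hI2 0
  have w3 := aux_vanish (-I) hnI hnI2 1
  have w2 := aux_vanish (-I) hnI hnI2 0
  have hne1 : ∀ x : ℝ, (x : ℂ) - I ≠ 0 := aux_ne I (by simp)
  have hne2 : ∀ x : ℝ, (x : ℂ) + I ≠ 0 := by
    intro x; have := aux_ne (-I) (by simp) x; simpa [sub_neg_eq_add] using this
  have harct : Integrable fun x : ℝ => (55 * I / 16) * (((1 + x ^ 2)⁻¹ : ℝ) : ℂ) :=
    (integrable_inv_one_add_sq.ofReal (𝕜 := ℂ)).const_mul _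
  have harctval : ∫ x : ℝ, (55 * I / 16) * (((1 + x ^ 2)⁻¹ : ℝ) : ℂ) = 55 * Real.pi * I / 16 := by
    rw [MeasureTheory.integral_const_mul]
    rw [show (fun a : ℝ => (((1 + a ^ 2)⁻¹ : ℝ) : ℂ))
      = fun a : ℝ => ((RCLike.ofReal ((1 + a ^ 2)⁻¹) : ℂ)) from rfl,
      integral_ofReal, integral_univ_inv_one_add_sq]
    norm_num
    ring
  have hdecomp : ∀ x : ℝ,
      (-7 * I + 26 * (x : ℂ) + 15 * I * (x : ℂ) ^ 2) / (((x : ℂ) - I) ^ 5 * ((x : ℂ) + I) ^ 3)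
      = (-(1:ℂ)/2) * (((x : ℂ) - I) ^ 5)⁻¹ + (-(5:ℂ)*I/4) * (((x : ℂ) - I) ^ 4)⁻¹
        + (-(3:ℂ)/8) * (((x : ℂ) - I) ^ 3)⁻¹ + (-(23:ℂ)*I/16) * (((x : ℂ) - I) ^ 2)⁻¹
        + ((3:ℂ)/2) * (((x : ℂ) - (-I)) ^ 3)⁻¹ + (-(2:ℂ)*I) * (((x : ℂ) - (-I)) ^ 2)⁻¹
        + (55 * I / 16) * (((1 + x ^ 2)⁻¹ : ℝ) : ℂ) := by
    intro x
    have h1 := hne1 x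
    have h2 := hne2 x
    have h4 : (((1 + x ^ 2)⁻¹ : ℝ) : ℂ) = (((x : ℂ) - I) * ((x : ℂ) + I))⁻¹ := by
      push_cast
      congr 1
      have hIm : I * I = -1 := Complex.I_mul_I
      ring_nf
      rw [Complex.I_sq]
      ring
    rw [h4, sub_neg_eq_add]
    exact key_decomp (x : ℂ) h1 h2
  rw [show ((3:ℕ)+2) = 5 from rfl] at int5 v5
  rw [show ((2:ℕ)+2) = 4 from rfl] at int4 v4
  rw [show ((1:ℕ)+2) = 3 from rfl] at int3 jnt3 v3 w3
  rw [show ((0:ℕ)+2) = 2 from rfl] at int2 jnt2 v2 w2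
  rw [integral_congr_ae (Filter.Eventually.of_forall hdecomp)]
  have i1 : Integrable (fun x : ℝ => (-(1:ℂ)/2) * (((x:ℂ) - I) ^ 5)⁻¹) := int5.const_mul _
  have i2 : Integrable (fun x : ℝ => (-(5:ℂ)*I/4) * (((x:ℂ) - I) ^ 4)⁻¹) := int4.const_mul _
  have i3 : Integrable (fun x : ℝ => (-(3:ℂ)/8) * (((x:ℂ) - I) ^ 3)⁻¹) := int3.const_mul _
  have i4 : Integrable (fun x : ℝ => (-(23:ℂ)*I/16) * (((x:ℂ) - I) ^ 2)⁻¹) := int2.const_mul _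
  have j3 : Integrable (fun x : ℝ => ((3:ℂ)/2) * (((x:ℂ) - (-I)) ^ 3)⁻¹) := jnt3.const_mul _
  have j2 : Integrable (fun x : ℝ => (-(2:ℂ)*I) * (((x:ℂ) - (-I)) ^ 2)⁻¹) := jnt2.const_mul _
  have s2 : Integrable (fun x : ℝ => (-(1:ℂ)/2) * (((x:ℂ) - I) ^ 5)⁻¹
      + (-(5:ℂ)*I/4) * (((x:ℂ) - I) ^ 4)⁻¹) := i1.add i2
  have s3 : Integrable (fun x : ℝ => (-(1:ℂ)/2) * (((x:ℂ) - I) ^ 5)⁻¹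
      + (-(5:ℂ)*I/4) * (((x:ℂ) - I) ^ 4)⁻¹ + (-(3:ℂ)/8) * (((x:ℂ) - I) ^ 3)⁻¹) := s2.add i3
  have s4 : Integrable (fun x : ℝ => (-(1:ℂ)/2) * (((x:ℂ) - I) ^ 5)⁻¹
      + (-(5:ℂ)*I/4) * (((x:ℂ) - I) ^ 4)⁻¹ + (-(3:ℂ)/8) * (((x:ℂ) - I) ^ 3)⁻¹
      + (-(23:ℂ)*I/16) * (((x:ℂ) - I) ^ 2)⁻¹) := s3.add i4
  have s5 : Integrable (fun x : ℝ => (-(1:ℂ)/2) * (((x:ℂ) - I) ^ 5)⁻¹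
      + (-(5:ℂ)*I/4) * (((x:ℂ) - I) ^ 4)⁻¹ + (-(3:ℂ)/8) * (((x:ℂ) - I) ^ 3)⁻¹
      + (-(23:ℂ)*I/16) * (((x:ℂ) - I) ^ 2)⁻¹ + ((3:ℂ)/2) * (((x:ℂ) - (-I)) ^ 3)⁻¹) := s4.add j3
  have s6 : Integrable (fun x : ℝ => (-(1:ℂ)/2) * (((x:ℂ) - I) ^ 5)⁻¹
      + (-(5:ℂ)*I/4) * (((x:ℂ) - I) ^ 4)⁻¹ + (-(3:ℂ)/8) * (((x:ℂ) - I) ^ 3)⁻¹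
      + (-(23:ℂ)*I/16) * (((x:ℂ) - I) ^ 2)⁻¹ + ((3:ℂ)/2) * (((x:ℂ) - (-I)) ^ 3)⁻¹
      + (-(2:ℂ)*I) * (((x:ℂ) - (-I)) ^ 2)⁻¹) := s5.add j2
  rw [integral_add s6 harct, integral_add s5 j2, integral_add s4 j3, integral_add s3 i4,
    integral_add s2 i3, integral_add i1 i2]
  rw [harctval]
  simp only [MeasureTheory.integral_const_mul]
  rw [v5, v4, v3, v2, w3, w2]
  ring
end

section
/- The integral over the real line ∫_ℝ (−ix² − x + 4i)/((x − i)³(x + i)²) dx equals −3π/2. -/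
open Complex Real MeasureTheory Filter Topology

noncomputable def FF (x : ℝ) : ℂ :=
  -(3/2) * (Real.arctan x : ℂ) - (3/4)/((x:ℂ) - I) + (I/2)/((x:ℂ) - I)^2 - (3/4)/((x:ℂ) + I)

lemma hne1 (x : ℝ) : (x:ℂ) - I ≠ 0 := by
  intro h
  have := congrArg Complex.im h
  simp at this

lemma hne2 (x : ℝ) : (x:ℂ) + I ≠ 0 := by
  intro h
  have := congrArg Complex.im h
  simp at this

lemma abs1 (x : ℝ) : ‖((x:ℂ) - I)‖ ^ 2 = 1 + x ^ 2 := by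
  rw [Complex.sq_norm, Complex.normSq_apply]
  simp
  ring

lemma abs2 (x : ℝ) : ‖((x:ℂ) + I)‖ ^ 2 = 1 + x ^ 2 := by
  rw [Complex.sq_norm, Complex.normSq_apply]
  simp
  ring

lemma abs1_ge (x : ℝ) : 1 ≤ ‖((x:ℂ) - I)‖ := by
  nlinarith [abs1 x, norm_nonneg ((x:ℂ) - I), sq_nonneg x]

lemma keyId (x : ℝ) (hA : (x:ℂ) - I ≠ 0) (hB : (x:ℂ) + I ≠ 0) (hne3 : (1:ℂ) + (x:ℂ)^2 ≠ 0) :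
    (-I * (x : ℂ) ^ 2 - (x : ℂ) + 4 * I) / (((x : ℂ) - I) ^ 3 * ((x : ℂ) + I) ^ 2) =
    -(3 / 2) * ((1:ℂ) + (x:ℂ) ^ 2)⁻¹ + (-(-(3 / 4) / ((x:ℂ) - I) ^ 2) + -I / ((x:ℂ) - I) ^ 3 - -(3 / 4) / ((x:ℂ) + I) ^ 2) := by
  have e1 : (1:ℂ) + (x:ℂ)^2 = ((x:ℂ) - I) * ((x:ℂ) + I) := by linear_combination Complex.I_sq
  rw [e1]
  field_simp
  have h2 : Complex.I^2 = -1 := Complex.I_sq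
  have h3 : Complex.I^3 = -Complex.I := by rw [pow_succ, h2]; simp [Complex.I_mul_I]
  have h4 : Complex.I^4 = (1:ℂ) := by rw [pow_succ, h3]; simp [Complex.I_mul_I]
  have h5 : Complex.I^5 = Complex.I := by rw [pow_succ, h4]; simp [Complex.I_mul_I]
  have h6 : Complex.I^6 = (-1:ℂ) := by rw [pow_succ, h5]; simp [Complex.I_mul_I]
  have h7 : Complex.I^7 = -Complex.I := by rw [pow_succ, h6]; simp [Complex.I_mul_I]
  have h8 : Complex.I^8 = (1:ℂ) := by rw [pow_succ, h7]; simp [Complex.I_mul_I]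
  have h9 : Complex.I^9 = Complex.I := by rw [pow_succ, h8]; simp [Complex.I_mul_I]
  have h10 : Complex.I^10 = (-1:ℂ) := by rw [pow_succ, h9]; simp [Complex.I_mul_I]
  have h11 : Complex.I^11 = -Complex.I := by rw [pow_succ, h10]; simp [Complex.I_mul_I]
  have h12 : Complex.I^12 = (1:ℂ) := by rw [pow_succ, h11]; simp [Complex.I_mul_I]
  ring_nf
  simp only [h2,h3,h4,h5,h6,h7,h8,h9,h10,h11,h12]
  ring

lemma hderivF (x : ℝ) :
    HasDerivAt FF ((-I * (x : ℂ) ^ 2 - (x : ℂ) + 4 * I) / (((x : ℂ) - I) ^ 3 * ((x : ℂ) + I) ^ 2)) x := by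
  have h0 : HasDerivAt (fun z : ℂ => z - I) 1 (x:ℂ) := (hasDerivAt_id _).sub_const I
  have h0' : HasDerivAt (fun z : ℂ => z + I) 1 (x:ℂ) := (hasDerivAt_id _).add_const I
  have h1 : HasDerivAt (fun z : ℂ => (3/4)/(z - I)) (-(3/4)/((x:ℂ) - I)^2) (x:ℂ) := by
    have := ((h0.inv (hne1 x)).const_mul (3/4 : ℂ))
    simpa [div_eq_mul_inv, neg_div, mul_comm, mul_assoc, mul_left_comm] using this
  have h2 : HasDerivAt (fun z : ℂ => (I/2)/(z - I)^2) (-I/((x:ℂ) - I)^3) (x:ℂ) := by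
    have hp : HasDerivAt (fun z : ℂ => (z - I)^2) (2*((x:ℂ) - I)) (x:ℂ) := by
      simpa using h0.fun_pow 2
    have := (hp.inv (pow_ne_zero 2 (hne1 x))).const_mul (I/2 : ℂ)
    refine this.congr_deriv (Eq.symm ?_)
    have hA := hne1 x
    field_simp
  have h3 : HasDerivAt (fun z : ℂ => (3/4)/(z + I)) (-(3/4)/((x:ℂ) + I)^2) (x:ℂ) := by
    have := ((h0'.inv (hne2 x)).const_mul (3/4 : ℂ))
    simpa [div_eq_mul_inv, neg_div, mul_comm, mul_assoc, mul_left_comm] using this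
  have hat : HasDerivAt (fun y : ℝ => -(3/2 : ℂ) * (Real.arctan y : ℂ))
      (-(3/2 : ℂ) * ((1 / (1 + x^2) : ℝ) : ℂ)) x :=
    ((Real.hasDerivAt_arctan x).ofReal_comp).const_mul _
  have hG : HasDerivAt (fun y : ℝ => -(3/4)/((y:ℂ) - I) + (I/2)/((y:ℂ) - I)^2 - (3/4)/((y:ℂ) + I))
      (-(-(3/4)/((x:ℂ) - I)^2) + (-I/((x:ℂ) - I)^3) - (-(3/4)/((x:ℂ) + I)^2)) x := by
    have := (((h1.neg).add h2).sub h3).comp_ofReal (z := x)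
    simpa [neg_div] using this
  have := hat.add hG
  have heq : FF = fun y : ℝ => -(3/2 : ℂ) * (Real.arctan y : ℂ) +
      (-(3/4)/((y:ℂ) - I) + (I/2)/((y:ℂ) - I)^2 - (3/4)/((y:ℂ) + I)) := by
    funext y; simp [FF]; ring
  rw [heq]
  refine this.congr_deriv (Eq.symm ?_)
  have e1 : (1:ℂ) + (x:ℂ)^2 = ((x:ℂ) - I) * ((x:ℂ) + I) := by
    linear_combination Complex.I_sq
  have hne3 : (1:ℂ) + (x:ℂ)^2 ≠ 0 := by
    rw [e1]; exact mul_ne_zero (hne1 x) (hne2 x)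
  push_cast
  linear_combination keyId x (hne1 x) (hne2 x) hne3

lemma hInt : Integrable (fun x : ℝ =>
    (-I * (x : ℂ) ^ 2 - (x : ℂ) + 4 * I) / (((x : ℂ) - I) ^ 3 * ((x : ℂ) + I) ^ 2)) := by
  have hcont : Continuous (fun x : ℝ =>
      (-I * (x : ℂ) ^ 2 - (x : ℂ) + 4 * I) / (((x : ℂ) - I) ^ 3 * ((x : ℂ) + I) ^ 2)) := by
    apply Continuous.div (by continuity) (by continuity)
    intro x
    exact mul_ne_zero (pow_ne_zero _ (hne1 x)) (pow_ne_zero _ (hne2 x))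
  refine (integrable_inv_one_add_sq.const_mul 6).mono' hcont.aestronglyMeasurable ?_
  filter_upwards with x
  rw [norm_div]
  have ha := abs1 x
  have hb := abs2 x
  have ha1 := abs1_ge x
  have hnum : ‖-I * (x : ℂ) ^ 2 - (x : ℂ) + 4 * I‖ ≤ x^2 + |x| + 4 := by
    calc ‖-I * (x : ℂ) ^ 2 - (x : ℂ) + 4 * I‖
        ≤ ‖-I * (x : ℂ) ^ 2 - (x : ℂ)‖ + ‖(4:ℂ) * I‖ := norm_add_le _ _
      _ ≤ ‖-I * (x : ℂ) ^ 2‖ + ‖(x:ℂ)‖ + ‖(4:ℂ) * I‖ := by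
          gcongr; exact norm_sub_le _ _
      _ = x^2 + |x| + 4 := by
          simp [Complex.norm_real, sq_abs]
  have hden : (1 + x^2) * (1 + x^2) ≤ ‖(((x : ℂ) - I) ^ 3 * ((x : ℂ) + I) ^ 2)‖ := by
    rw [norm_mul, norm_pow, norm_pow]
    have : ‖((x:ℂ) - I)‖ ^ 3 = ‖((x:ℂ) - I)‖ ^ 2 * ‖((x:ℂ) - I)‖ := by ring
    simp only [this, ha, hb]
    nlinarith [sq_nonneg x]
  have hpos : (0:ℝ) < 1 + x^2 := by positivity
  have hnum2 : x^2 + |x| + 4 ≤ 6 * (1 + x^2) := by nlinarith [_root_.sq_abs x, abs_nonneg x]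
  calc ‖-I * (x : ℂ) ^ 2 - (x : ℂ) + 4 * I‖ / ‖(((x : ℂ) - I) ^ 3 * ((x : ℂ) + I) ^ 2)‖
      ≤ (6 * (1 + x^2)) / ((1 + x^2) * (1 + x^2)) := by
        apply div_le_div₀ (by positivity) (hnum.trans hnum2) (by positivity) hden
    _ = 6 * (1 + x^2)⁻¹ := by
        rw [mul_div_assoc, div_mul_cancel_left₀ (ne_of_gt hpos)]

lemma Gzero (l : Filter ℝ) (h : Tendsto (fun x : ℝ => |x|) l atTop) :
    Tendsto (fun x : ℝ => -(3/4)/((x:ℂ) - I) + (I/2)/((x:ℂ) - I)^2 - (3/4)/((x:ℂ) + I)) l (𝓝 0) := by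
  have h1 : Tendsto (fun x : ℝ => ‖((x:ℂ) - I)‖) l atTop :=
    tendsto_atTop_mono (fun x => by simpa using Complex.abs_re_le_norm ((x:ℂ) - I)) h
  have h2 : Tendsto (fun x : ℝ => ‖((x:ℂ) + I)‖) l atTop :=
    tendsto_atTop_mono (fun x => by simpa using Complex.abs_re_le_norm ((x:ℂ) + I)) h
  have i1 : Tendsto (fun x : ℝ => ((x:ℂ) - I)⁻¹) l (𝓝 0) := by
    rw [tendsto_zero_iff_norm_tendsto_zero]
    simpa [Pi.inv_def] using h1.inv_tendsto_atTop
  have i1sq : Tendsto (fun x : ℝ => (((x:ℂ) - I)^2)⁻¹) l (𝓝 0) := by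
    rw [tendsto_zero_iff_norm_tendsto_zero]
    simpa [norm_pow, Pi.inv_def, Function.comp_def] using ((tendsto_pow_atTop (two_ne_zero)).comp h1).inv_tendsto_atTop
  have i2 : Tendsto (fun x : ℝ => ((x:ℂ) + I)⁻¹) l (𝓝 0) := by
    rw [tendsto_zero_iff_norm_tendsto_zero]
    simpa [Pi.inv_def] using h2.inv_tendsto_atTop
  have := ((i1.const_mul (-(3/4) : ℂ)).add (i1sq.const_mul (I/2 : ℂ))).sub (i2.const_mul ((3/4) : ℂ))
  simpa [div_eq_mul_inv] using this

lemma hFFeq : FF = fun x : ℝ => (-(3/2 : ℂ) * (Real.arctan x : ℂ)) +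
    (-(3/4)/((x:ℂ) - I) + (I/2)/((x:ℂ) - I)^2 - (3/4)/((x:ℂ) + I)) := by
  funext y; simp only [FF]; ring

lemma tendTop : Tendsto FF atTop (𝓝 (-(3 * (Real.pi : ℂ) / 4))) := by
  rw [hFFeq]
  have ha : Tendsto (fun x : ℝ => -(3/2 : ℂ) * (Real.arctan x : ℂ)) atTop
      (𝓝 (-(3/2 : ℂ) * ((Real.pi/2 : ℝ) : ℂ))) :=
    ((Complex.continuous_ofReal.tendsto _).comp
      (tendsto_nhds_of_tendsto_nhdsWithin Real.tendsto_arctan_atTop)).const_mul _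
  have hg := Gzero atTop tendsto_abs_atTop_atTop
  have hval : -(3/2 : ℂ) * ((Real.pi/2 : ℝ) : ℂ) + 0 = -(3 * (Real.pi : ℂ) / 4) := by
    push_cast; ring
  exact hval ▸ (ha.add hg)

lemma tendBot : Tendsto FF atBot (𝓝 (3 * (Real.pi : ℂ) / 4)) := by
  rw [hFFeq]
  have ha : Tendsto (fun x : ℝ => -(3/2 : ℂ) * (Real.arctan x : ℂ)) atBot
      (𝓝 (-(3/2 : ℂ) * ((-(Real.pi/2) : ℝ) : ℂ))) :=
    ((Complex.continuous_ofReal.tendsto _).comp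
      (tendsto_nhds_of_tendsto_nhdsWithin Real.tendsto_arctan_atBot)).const_mul _
  have hg := Gzero atBot tendsto_abs_atBot_atTop
  have hval : -(3/2 : ℂ) * ((-(Real.pi/2) : ℝ) : ℂ) + 0 = 3 * (Real.pi : ℂ) / 4 := by
    push_cast; ring
  exact hval ▸ (ha.add hg)

theorem stmt_19 :
    ∫ x : ℝ, (-I * (x : ℂ) ^ 2 - (x : ℂ) + 4 * I) / (((x : ℂ) - I) ^ 3 * ((x : ℂ) + I) ^ 2) = -(3 * (Real.pi : ℂ) / 2) := by
  rw [MeasureTheory.integral_of_hasDerivAt_of_tendsto hderivF hInt tendBot tendTop]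
  ring
end
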